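/- Let Ξ ⊆ ℝ^{p+1} be a bounded open set and (S, 𝔖, P) a probability space. Let ψ : S × Ξ → ℝ^q be a jointly measurable random field such that for P-a.e. ω the map ξ ↦ ψ(ω,ξ) is continuously differentiable with Jacobian ∇_ξ ψ(ω,ξ) ∈ ℝ^{q×(p+1)}, and assume ∫_S ∫_Ξ ‖∇_ξ ψ(ω,ξ)‖² dξ dP(ω) < +∞. Then for every smooth compactly supported test function φ ∈ C_c^∞(Ξ × ℝ^q; ℝ^{p+1}): ∫_S ∫_Ξ ( div_ξ φ(ξ, ψ(ω,ξ)) + ⟨∇_x φ(ξ, ψ(ω,ξ)), ∇_ξ ψ(ω,ξ)⟩_F ) dξ dP(ω) = 0. Equivalently, the mixture μ^Q_ξ := law of ψ(·,ξ), paired with the superposed matrix field given by the conditional expectation of ∇_ξψ(ξ) given ψ(ξ), is a distributional solution of the generalized continuity equation. -/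

import Mathlib

open MeasureTheory Set

/-- The Jacobian matrix `Dψ(ξ) ∈ ℝ^{q×(p+1)}` of a map `ψ : ℝ^{p+1} → ℝ^q`,
with entries `(Dψ(ξ))_{j i} = ∂_{ξ^i} ψ^j(ξ)`. -/
noncomputable def jac (p q : ℕ) (ψ : (Fin (p + 1) → ℝ) → Fin q → ℝ)
    (ξ : Fin (p + 1) → ℝ) : Fin q → Fin (p + 1) → ℝ :=
  fun j i => fderiv ℝ ψ ξ (Pi.single i 1) j

lemma clm_apply_pi {m q : ℕ} (L : ((Fin m → ℝ) × (Fin q → ℝ)) →L[ℝ] (Fin m → ℝ))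
    (w : Fin q → ℝ) (i : Fin m) :
    L (0, w) i = ∑ j : Fin q, w j * L (0, Pi.single j 1) i := by
  set M : (Fin q → ℝ) →L[ℝ] (Fin m → ℝ) :=
    L.comp (ContinuousLinearMap.inr ℝ (Fin m → ℝ) (Fin q → ℝ)) with hM
  have key : M w = ∑ j : Fin q, w j • M ((Pi.single j 1 : Fin q → ℝ)) := by
    conv_lhs => rw [← Finset.univ_sum_single w]
    rw [map_sum]
    refine Finset.sum_congr rfl fun j _ => ?_
    have hsingle : (Pi.single j (w j) : Fin q → ℝ) = w j • (Pi.single j 1 : Fin q → ℝ) := by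
      funext k
      simp [Pi.single_apply, mul_ite]
    rw [hsingle]; exact M.map_smul _ _
  have h1 : L (0, w) = M w := rfl
  have h2 : ∀ j, M (Pi.single j 1) = L (0, Pi.single j 1) := fun j => rfl
  rw [h1, key, Finset.sum_apply]
  exact Finset.sum_congr rfl fun j _ => by rw [Pi.smul_apply, smul_eq_mul, h2]

lemma gce_inner (p q : ℕ) (Ξ : Set (Fin (p + 1) → ℝ)) (hΞo : IsOpen Ξ)
    (ψ : (Fin (p + 1) → ℝ) → Fin q → ℝ) (hC1 : ContDiffOn ℝ 1 ψ Ξ)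
    (φ : (Fin (p + 1) → ℝ) × (Fin q → ℝ) → Fin (p + 1) → ℝ)
    (hφ : ContDiff ℝ (⊤ : ℕ∞) φ) (hφc : HasCompactSupport φ)
    (hφs : tsupport φ ⊆ Ξ ×ˢ univ) :
    ∫ ξ in Ξ,
        ((∑ i : Fin (p + 1), fderiv ℝ φ (ξ, ψ ξ) (Pi.single i 1, 0) i)
          + ∑ i : Fin (p + 1), ∑ j : Fin q,
              fderiv ℝ φ (ξ, ψ ξ) (0, Pi.single j 1) i
                * jac p q ψ ξ j i) = 0 := by
  classical
  set K : Set (Fin (p + 1) → ℝ) := Prod.fst '' tsupport φ with hK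
  have hKc : IsCompact K := hφc.image continuous_fst
  have hKΞ : K ⊆ Ξ := by
    rintro ξ ⟨z, hz, rfl⟩
    exact (hφs hz).1
  have hmem : ∀ z : (Fin (p + 1) → ℝ) × (Fin q → ℝ), z.1 ∉ K → z ∉ tsupport φ := by
    intro z hz hzt
    exact hz ⟨z, hzt, rfl⟩
  have hφ0 : ∀ z, z.1 ∉ K → φ z = 0 := fun z hz => image_eq_zero_of_notMem_tsupport (hmem z hz)
  have hfd0 : ∀ z, z.1 ∉ K → fderiv ℝ φ z = 0 := by
    intro z hz
    have h0 : φ =ᶠ[nhds z] fun _ => 0 := by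
      have := notMem_tsupport_iff_eventuallyEq.mp (hmem z hz)
      exact this
    rw [h0.fderiv_eq]
    exact fderiv_const_apply 0
  -- big box
  obtain ⟨R, hR⟩ := hKc.isBounded.subset_closedBall 0
  set M : ℝ := max R 0 with hM
  have hM0 : (0:ℝ) ≤ M := le_max_right _ _
  have hKM : K ⊆ Metric.closedBall 0 M :=
    hR.trans (Metric.closedBall_subset_closedBall (le_max_left _ _))
  set a : Fin (p + 1) → ℝ := fun _ => -(M + 1) with ha
  set b : Fin (p + 1) → ℝ := fun _ => (M + 1) with hb
  have hab : a ≤ b := fun i => by simp only [ha, hb]; linarith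
  have hnotK : ∀ ξ : Fin (p + 1) → ℝ, M < ‖ξ‖ → ξ ∉ K := by
    intro ξ hξ hmem'
    have := hKM hmem'
    rw [Metric.mem_closedBall, dist_zero_right] at this
    linarith
  -- composed function and derivative
  set F : (Fin (p + 1) → ℝ) → Fin (p + 1) → ℝ := fun ξ => φ (ξ, ψ ξ) with hF
  set F' : (Fin (p + 1) → ℝ) → ((Fin (p + 1) → ℝ) →L[ℝ] (Fin (p + 1) → ℝ)) := fun ξ =>
    (fderiv ℝ φ (ξ, ψ ξ)).comp
      ((ContinuousLinearMap.id ℝ (Fin (p + 1) → ℝ)).prod (fderiv ℝ ψ ξ)) with hF'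
  have hψd : ∀ ξ ∈ Ξ, HasFDerivAt ψ (fderiv ℝ ψ ξ) ξ := fun ξ hξ =>
    ((hC1.differentiableOn one_ne_zero).differentiableAt (hΞo.mem_nhds hξ)).hasFDerivAt
  have hF'0 : ∀ ξ, ξ ∉ K → F' ξ = 0 := by
    intro ξ hξ
    simp only [hF', hfd0 (ξ, ψ ξ) hξ, ContinuousLinearMap.zero_comp]
  have hFd : ∀ ξ, HasFDerivAt F (F' ξ) ξ := by
    intro ξ
    by_cases hξ : ξ ∈ Ξ
    · exact ((hφ.differentiable (by simp) (ξ, ψ ξ)).hasFDerivAt).comp ξ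
        ((hasFDerivAt_id ξ).prodMk (hψd ξ hξ))
    · have hξK : ξ ∉ K := fun h => hξ (hKΞ h)
      rw [hF'0 ξ hξK]
      have hev : F =ᶠ[nhds ξ] fun _ => (0 : Fin (p + 1) → ℝ) := by
        filter_upwards [hKc.isClosed.isOpen_compl.mem_nhds hξK] with ξ' hξ'
        exact hφ0 (ξ', ψ ξ') hξ'
      exact (hasFDerivAt_const (0 : Fin (p + 1) → ℝ) ξ).congr_of_eventuallyEq hev
  have hFc : Continuous F := (Differentiable.continuous fun ξ => (hFd ξ).differentiableAt)
  -- divergence and its continuity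
  set D : (Fin (p + 1) → ℝ) → ℝ := fun ξ => ∑ i, F' ξ (Pi.single i 1) i with hD
  have hD0 : ∀ ξ, ξ ∉ K → D ξ = 0 := by
    intro ξ hξ
    simp [hD, hF'0 ξ hξ]
  have hDc : Continuous D := by
    rw [continuous_iff_continuousAt]
    intro ξ
    by_cases hξ : ξ ∈ Ξ
    · have hc0 : ContinuousAt ψ ξ := (hC1.continuousOn.continuousAt (hΞo.mem_nhds hξ))
      have hc1 : ContinuousAt (fun ξ => fderiv ℝ φ (ξ, ψ ξ)) ξ :=
        ((hφ.continuous_fderiv (by simp)).continuousAt).comp (continuousAt_id.prodMk hc0)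
      have hc2 : ContinuousAt (fun ξ => fderiv ℝ ψ ξ) ξ :=
        (hC1.continuousOn_fderiv_of_isOpen hΞo le_rfl).continuousAt (hΞo.mem_nhds hξ)
      have : ∀ i : Fin (p + 1), ContinuousAt (fun ξ => F' ξ (Pi.single i 1) i) ξ := by
        intro i
        have happ : ContinuousAt (fun ξ =>
            fderiv ℝ φ (ξ, ψ ξ) (Pi.single i 1, fderiv ℝ ψ ξ (Pi.single i 1))) ξ :=
          isBoundedBilinearMap_apply.continuous.continuousAt.comp
            (hc1.prodMk (continuousAt_const.prodMk
              (isBoundedBilinearMap_apply.continuous.continuousAt.comp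
                (hc2.prodMk continuousAt_const))))
        exact ((continuous_apply i).continuousAt).comp happ
      exact tendsto_finset_sum _ fun i _ => this i
    · have hξK : ξ ∉ K := fun h => hξ (hKΞ h)
      have hev : D =ᶠ[nhds ξ] fun _ => (0 : ℝ) := by
        filter_upwards [hKc.isClosed.isOpen_compl.mem_nhds hξK] with ξ' hξ'
        exact hD0 ξ' hξ'
      exact continuousAt_const.congr hev.symm
  have Hi : IntegrableOn D (Icc a b) :=
    hDc.continuousOn.integrableOn_compact isCompact_Icc
  -- divergence theorem
  have hdiv := integral_divergence_of_hasFDerivAt_off_countable (a := a) (b := b) hab F F' ∅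
    countable_empty hFc.continuousOn (fun x _ => hFd x) Hi
  have hzero : ∫ ξ in Icc a b, D ξ = 0 := by
    rw [hD, hdiv]
    apply Finset.sum_eq_zero
    intro i _
    have h1 : ∀ x : Fin p → ℝ, F (Fin.insertNth i (b i) x : Fin (p+1) → ℝ) i = 0 := by
      intro x
      set y : Fin (p + 1) → ℝ := (Fin.insertNth i (b i) x : Fin (p+1) → ℝ) with hy
      have hyi : y i = M + 1 := by rw [hy]; simp [Fin.insertNth_apply_same, hb]
      have hnorm : M < ‖y‖ := by
        have h := norm_le_pi_norm y i
        rw [hyi, Real.norm_eq_abs, abs_of_nonneg (by linarith : (0:ℝ) ≤ M + 1)] at h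
        linarith
      have hFy : F y = 0 := hφ0 (y, ψ y) (hnotK y hnorm)
      simp [hFy]
    have h2 : ∀ x : Fin p → ℝ, F (Fin.insertNth i (a i) x : Fin (p+1) → ℝ) i = 0 := by
      intro x
      set y : Fin (p + 1) → ℝ := (Fin.insertNth i (a i) x : Fin (p+1) → ℝ) with hy
      have hyi : y i = -(M + 1) := by rw [hy]; simp [Fin.insertNth_apply_same, ha]
      have hnorm : M < ‖y‖ := by
        have h := norm_le_pi_norm y i
        rw [hyi, Real.norm_eq_abs, abs_neg, abs_of_nonneg (by linarith : (0:ℝ) ≤ M + 1)] at h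
        linarith
      have hFy : F y = 0 := hφ0 (y, ψ y) (hnotK y hnorm)
      simp [hFy]
    simp [h1, h2]
  -- identify the integrand with D on Ξ
  have hEq : ∀ ξ ∈ Ξ,
      ((∑ i : Fin (p + 1), fderiv ℝ φ (ξ, ψ ξ) (Pi.single i 1, 0) i)
        + ∑ i : Fin (p + 1), ∑ j : Fin q,
            fderiv ℝ φ (ξ, ψ ξ) (0, Pi.single j 1) i * jac p q ψ ξ j i) = D ξ := by
    intro ξ hξ
    have hterm : ∀ i : Fin (p + 1), F' ξ (Pi.single i 1) i
        = fderiv ℝ φ (ξ, ψ ξ) (Pi.single i 1, 0) i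
          + ∑ j : Fin q, fderiv ℝ φ (ξ, ψ ξ) (0, Pi.single j 1) i * jac p q ψ ξ j i := by
      intro i
      have h1 : F' ξ (Pi.single i 1)
          = fderiv ℝ φ (ξ, ψ ξ) (Pi.single i 1, fderiv ℝ ψ ξ (Pi.single i 1)) := rfl
      have hsplit : ((Pi.single i 1 : Fin (p+1) → ℝ), fderiv ℝ ψ ξ (Pi.single i 1))
          = (Pi.single i 1, (0 : Fin q → ℝ)) + ((0 : Fin (p+1) → ℝ),
              fderiv ℝ ψ ξ (Pi.single i 1)) := by
        simp [Prod.ext_iff]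
      rw [h1, hsplit, map_add, Pi.add_apply,
        clm_apply_pi (fderiv ℝ φ (ξ, ψ ξ)) (fderiv ℝ ψ ξ (Pi.single i 1)) i]
      congr 1
      apply Finset.sum_congr rfl
      intro j _
      rw [mul_comm]
      rfl
    rw [hD]
    simp only [hterm]
    rw [Finset.sum_add_distrib]
  calc ∫ ξ in Ξ,
        ((∑ i : Fin (p + 1), fderiv ℝ φ (ξ, ψ ξ) (Pi.single i 1, 0) i)
          + ∑ i : Fin (p + 1), ∑ j : Fin q,
              fderiv ℝ φ (ξ, ψ ξ) (0, Pi.single j 1) i * jac p q ψ ξ j i)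
      = ∫ ξ in Ξ, D ξ := setIntegral_congr_fun hΞo.measurableSet hEq
    _ = ∫ ξ, D ξ := setIntegral_eq_integral_of_forall_compl_eq_zero
        (fun ξ hξ => hD0 ξ (fun h => hξ (hKΞ h)))
    _ = ∫ ξ in Icc a b, D ξ := by
        refine (setIntegral_eq_integral_of_forall_compl_eq_zero ?_).symm
        intro ξ hξ
        refine hD0 ξ ?_
        intro hξK
        apply hξ
        have hn : ‖ξ‖ ≤ M := by
          have := hKM hξK
          rwa [Metric.mem_closedBall, dist_zero_right] at this
        have habs : ∀ i, |ξ i| ≤ M := by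
          intro i
          have h := norm_le_pi_norm ξ i
          rw [Real.norm_eq_abs] at h; linarith
        rw [Set.mem_Icc]
        refine ⟨fun i => ?_, fun i => ?_⟩
        · have := (abs_le.mp (habs i)).1
          show -(M + 1) ≤ ξ i
          linarith
        · have := (abs_le.mp (habs i)).2
          show ξ i ≤ M + 1
          linarith
    _ = 0 := hzero

/-- **Superposition solves the GCE.** Let `ψ` be a jointly measurable
random field on a bounded open `Ξ ⊆ ℝ^{p+1}`, a.s. continuously differentiable in `ξ`,
with `∫_S ∫_Ξ ‖∇_ξψ(ω,ξ)‖² dξ dP(ω) < ∞`. Then for every test function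
`φ ∈ C_c^∞(Ξ × ℝ^q; ℝ^{p+1})`:
`∫_S ∫_Ξ ( div_ξ φ(ξ, ψ(ω,ξ)) + ⟨∇_x φ(ξ, ψ(ω,ξ)), ∇_ξψ(ω,ξ)⟩_F ) dξ dP(ω) = 0`,
i.e. the mixture of the delta-valued solutions `δ_{ψ(ω,ξ)}` is a distributional solution
of the generalized continuity equation. -/
theorem superposition_solves_gce (p q : ℕ)
    (Ξ : Set (Fin (p + 1) → ℝ)) (hΞo : IsOpen Ξ) (hΞb : Bornology.IsBounded Ξ)
    {S : Type*} [MeasurableSpace S] (P : Measure S) [IsProbabilityMeasure P]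
    (ψ : S → (Fin (p + 1) → ℝ) → Fin q → ℝ)
    (hψmeas : Measurable fun z : S × (Fin (p + 1) → ℝ) => ψ z.1 z.2)
    (hψC1 : ∀ᵐ ω ∂P, ContDiffOn ℝ 1 (ψ ω) Ξ)
    -- finite energy: ∫_S ∫_Ξ ‖∇_ξψ(ω,ξ)‖² dξ dP(ω) < ∞
    (henergy : (∫⁻ ω, ∫⁻ ξ in Ξ,
      ENNReal.ofReal (∑ j : Fin q, ∑ i : Fin (p + 1), (jac p q (ψ ω) ξ j i) ^ 2)
        ∂volume ∂P) < ⊤) :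
    ∀ φ : (Fin (p + 1) → ℝ) × (Fin q → ℝ) → Fin (p + 1) → ℝ,
      ContDiff ℝ (⊤ : ℕ∞) φ → HasCompactSupport φ →
      tsupport φ ⊆ Ξ ×ˢ univ →
      ∫ ω, (∫ ξ in Ξ,
        ((∑ i : Fin (p + 1), fderiv ℝ φ (ξ, ψ ω ξ) (Pi.single i 1, 0) i)
          + ∑ i : Fin (p + 1), ∑ j : Fin q,
              fderiv ℝ φ (ξ, ψ ω ξ) (0, Pi.single j 1) i
                * jac p q (ψ ω) ξ j i)) ∂P = 0 := by

  intro φ hφ hφc hφs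
  have h0 : (fun ω => ∫ ξ in Ξ,
      ((∑ i : Fin (p + 1), fderiv ℝ φ (ξ, ψ ω ξ) (Pi.single i 1, 0) i)
        + ∑ i : Fin (p + 1), ∑ j : Fin q,
            fderiv ℝ φ (ξ, ψ ω ξ) (0, Pi.single j 1) i
              * jac p q (ψ ω) ξ j i)) =ᵐ[P] 0 := by
    filter_upwards [hψC1] with ω hω
    exact gce_inner p q Ξ hΞo (ψ ω) hω φ hφ hφc hφs
  exact integral_eq_zero_of_ae h0
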